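/- Let I be a finite set of instances and f : I → ℝ with f i > 0 for all i. Consider a sequence of capacity vectors n_0, n_1, n_2, … : I → ℝ with n_0 i ≥ 0 for all i, where at each step k a nonempty subset V_k ⊆ { i ∈ I : n_k i > 0 } is chosen, σ_k = min_{i ∈ V_k} (n_k i / f i), and n_{k+1} i = n_k i − σ_k · f i for i ∈ V_k while n_{k+1} i = n_k i for i ∉ V_k. Then every n_k is nonnegative, the set { i : n_k i > 0 } is strictly decreasing in k (at least one index with positive capacity is zeroed at each step), and consequently the process admits at most |I| steps. -/
import Mathlib


/-- OrbitChain's greedy routing process: at each step `k < K` a nonempty set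
`V k` of instances with strictly positive residual capacity is chosen, the
bottleneck capacity `σ_k = min_{i ∈ V k} (n k i / f i)` is assigned, and
capacities of selected instances are decremented by `σ_k * f i`.  Then all
capacities stay nonnegative, the set of positive-capacity instances strictly
decreases at every step, and hence there are at most `|I|` steps. -/
theorem greedy_routing_terminates
    {I : Type*} [Fintype I]
    (f : I → ℝ) (hf : ∀ i, 0 < f i)
    (n : ℕ → I → ℝ) (hn0 : ∀ i, 0 ≤ n 0 i)
    (K : ℕ) (V : ℕ → Finset I)
    (hVne : ∀ k, k < K → (V k).Nonempty)
    (hVpos : ∀ k, k < K → ∀ i ∈ V k, 0 < n k i)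
    (hupd : ∀ k (hk : k < K), ∀ i ∈ V k,
      n (k + 1) i = n k i - (V k).inf' (hVne k hk) (fun j => n k j / f j) * f i)
    (hkeep : ∀ k, k < K → ∀ i ∉ V k, n (k + 1) i = n k i) :
    (∀ k, k ≤ K → ∀ i, 0 ≤ n k i) ∧
    (∀ k, k < K → {i | 0 < n (k + 1) i} ⊂ {i | 0 < n k i}) ∧
    K ≤ Fintype.card I := by
  classical
  -- Nonnegativity
  have hnonneg : ∀ k, k ≤ K → ∀ i, 0 ≤ n k i := by
    intro k
    induction k with
    | zero => intro _ i; exact hn0 i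
    | succ k ih =>
      intro hk i
      have hkK : k < K := lt_of_lt_of_le (Nat.lt_succ_self k) hk
      by_cases hi : i ∈ V k
      · rw [hupd k hkK i hi]
        have hle : (V k).inf' (hVne k hkK) (fun j => n k j / f j) ≤ n k i / f i :=
          Finset.inf'_le _ hi
        have : (V k).inf' (hVne k hkK) (fun j => n k j / f j) * f i ≤ n k i := by
          rw [← div_mul_cancel₀ (n k i) (hf i).ne']
          exact mul_le_mul_of_nonneg_right hle (hf i).le
        linarith
      · rw [hkeep k hkK i hi]
        exact ih (le_of_lt hkK) i
  -- Strict decrease of the positive set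
  have hssub : ∀ k, k < K → {i | 0 < n (k + 1) i} ⊂ {i | 0 < n k i} := by
    intro k hk
    constructor
    · intro i hi
      by_cases hiV : i ∈ V k
      · exact hVpos k hk i hiV
      · simpa [Set.mem_setOf_eq, hkeep k hk i hiV] using hi
    · intro hsub
      obtain ⟨i, hiV, hieq⟩ := (V k).exists_mem_eq_inf' (hVne k hk) (fun j => n k j / f j)
      have hzero : n (k + 1) i = 0 := by
        rw [hupd k hk i hiV, hieq, div_mul_cancel₀ _ (hf i).ne', sub_self]
      have : (0:ℝ) < n (k+1) i := hsub (hVpos k hk i hiV)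
      rw [hzero] at this
      exact lt_irrefl 0 this
  refine ⟨hnonneg, hssub, ?_⟩
  -- Cardinality bound
  set S : ℕ → Finset I := fun k => Finset.univ.filter (fun i => 0 < n k i) with hS
  have hcard : ∀ k, k < K → (S (k+1)).card < (S k).card := by
    intro k hk
    apply Finset.card_lt_card
    have h := hssub k hk
    constructor
    · intro i hi
      simp only [hS, Finset.mem_filter, Finset.mem_univ, true_and] at hi ⊢
      exact h.1 hi
    · intro hsub
      apply h.2
      intro i hi
      have : i ∈ S k := by
        simp only [hS, Finset.mem_filter, Finset.mem_univ, true_and]; exact hi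
      have := hsub this
      simp only [hS, Finset.mem_filter, Finset.mem_univ, true_and] at this
      exact this
  have hmain : ∀ k, k ≤ K → k + (S k).card ≤ (S 0).card := by
    intro k
    induction k with
    | zero => intro _; simp
    | succ k ih =>
      intro hk
      have hkK : k < K := lt_of_lt_of_le (Nat.lt_succ_self k) hk
      have := hcard k hkK
      have := ih (le_of_lt hkK)
      omega
  have := hmain K le_rfl
  have hle : (S 0).card ≤ Fintype.card I := Finset.card_le_univ _
  omega
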